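/- For every positive integer t there exists d0(t) such that the following holds for all real d ≥ d0(t), every integer i with 1 ≤ i ≤ t−1, and all real numbers x, y ≥ d/4. Setting c_u = x/d and c_v = y/d, define Σ¹ = (1/8)·( (1/c_v)[c_v·log((c_v·d − i)/(d − i)) − (c_v − 1)·d/(d − i)] + (1/c_u)[c_u·log((c_u·d − i)/(d − i)) − (c_u − 1)·d/(d − i)] ), Σ² = (1/(8t))·min(1/x, 1/y), and Σ³ = (8t²/d)·( |log(x/y)| + 8t/d ). Then Σ¹ + Σ² − Σ³ ≥ 0. -/

import Mathlib

open Real Set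

lemma mono_aux : MonotoneOn (fun s : ℝ => s/2 - 1/(2*s) - Real.log s) (Ici 1) := by
  apply monotoneOn_of_deriv_nonneg (convex_Ici 1)
  · apply ContinuousOn.sub
    · apply ContinuousOn.sub
      · exact (continuousOn_id.div_const 2)
      · apply ContinuousOn.div continuousOn_const
        · exact continuousOn_const.mul continuousOn_id
        · intro s hs; simp only [mem_Ici] at hs; positivity
    · apply ContinuousOn.log continuousOn_id
      intro s hs; simp only [mem_Ici] at hs; positivity
  · intro s hs
    rw [interior_Ici] at hs
    have hs0 : (0:ℝ) < s := lt_trans one_pos hs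
    apply DifferentiableAt.differentiableWithinAt
    apply DifferentiableAt.sub
    · apply DifferentiableAt.sub
      · exact (differentiable_id.differentiableAt).div_const 2
      · exact DifferentiableAt.div (differentiableAt_const _)
          ((differentiableAt_const _).mul differentiableAt_id) (by positivity)
    · exact Real.differentiableAt_log hs0.ne'
  · intro s hs
    rw [interior_Ici] at hs
    have hs0 : (0:ℝ) < s := lt_trans one_pos hs
    have h2s : (2*s) ≠ 0 := by positivity
    have h1 := (((hasDerivAt_id s).div_const 2).sub
        ((hasDerivAt_const s 1).div ((hasDerivAt_id s).const_mul 2) h2s)).sub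
        (Real.hasDerivAt_log hs0.ne')
    simp only [id_eq] at h1
    rw [show deriv (fun s : ℝ => s/2 - 1/(2*s) - Real.log s) s = _ from h1.deriv]
    field_simp
    nlinarith [sq_nonneg (s-1), hs0]

lemma log_le_half_sub {w : ℝ} (hw : 1 ≤ w) : Real.log w ≤ w/2 - 1/(2*w) := by
  have h1 := mono_aux (self_mem_Ici) (mem_Ici.mpr hw) hw
  simp only [Real.log_one] at h1
  nlinarith [h1]

lemma mono_aux2 : MonotoneOn (fun s : ℝ => Real.log s - (s-1) + (s-1)^2/2) (Ici 1) := by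
  apply monotoneOn_of_deriv_nonneg (convex_Ici 1)
  · apply ContinuousOn.add
    · apply ContinuousOn.sub
      · apply ContinuousOn.log continuousOn_id
        intro s hs; simp only [mem_Ici] at hs; positivity
      · exact (continuousOn_id.sub continuousOn_const)
    · exact ((continuousOn_id.sub continuousOn_const).pow 2).div_const 2
  · intro s hs
    rw [interior_Ici] at hs
    have hs0 : (0:ℝ) < s := lt_trans one_pos hs
    apply DifferentiableAt.differentiableWithinAt
    exact ((Real.differentiableAt_log hs0.ne').sub
      (differentiableAt_id.sub (differentiableAt_const _))).add
      (((differentiableAt_id.sub (differentiableAt_const _)).pow 2).div_const 2)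
  · intro s hs
    rw [interior_Ici] at hs
    have hs0 : (0:ℝ) < s := lt_trans one_pos hs
    have h1 := ((Real.hasDerivAt_log hs0.ne').sub
        ((hasDerivAt_id s).sub (hasDerivAt_const s 1))).add
        ((((hasDerivAt_id s).sub (hasDerivAt_const s 1)).pow 2).div_const 2)
    rw [show deriv (fun s : ℝ => Real.log s - (s-1) + (s-1)^2/2) s = _ from h1.deriv]
    norm_num
    nlinarith [mul_nonneg (inv_nonneg.mpr hs0.le) (sq_nonneg (s-1)), mul_inv_cancel₀ hs0.ne']

lemma quad_le_log {w : ℝ} (hw : 1 ≤ w) : (w-1) - (w-1)^2/2 ≤ Real.log w := by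
  have h1 := mono_aux2 (self_mem_Ici) (mem_Ici.mpr hw) hw
  simp only [Real.log_one] at h1
  nlinarith [h1]



lemma half_sub_le_log {w : ℝ} (h0 : 0 < w) (h1 : w ≤ 1) : w/2 - 1/(2*w) ≤ Real.log w := by
  have hw : 1 ≤ 1/w := by rw [le_div_iff₀ h0]; linarith
  have := log_le_half_sub hw
  rw [Real.log_div one_ne_zero h0.ne'] at this
  simp only [Real.log_one] at this
  have hne : w ≠ 0 := h0.ne'
  have h2 : 1/(2*(1/w)) = w/2 := by field_simp
  rw [h2] at this
  have h3 : 1/(2*w) = (1/w)/2 := by ring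
  rw [h3]
  linarith [this]

section helpers
variable {t i d z : ℝ}

-- common facts package
lemma facts (ht : 1 ≤ t) (hi1 : 1 ≤ i) (hit : i + 1 ≤ t)
    (hd : 10^7 * t^5 ≤ d) :
    0 < t ∧ 0 < d ∧ 16*i ≤ d ∧ 10^7*t ≤ d ∧ 10^7*t^2 ≤ d ∧ 10^7*t^3 ≤ d := by
  have ht0 : 0 < t := by linarith
  have h5 : t ≤ t^5 := by
    calc t = t^1 := (pow_one t).symm
    _ ≤ t^5 := pow_le_pow_right₀ ht (by norm_num)
  have h2 : t^2 ≤ t^5 := pow_le_pow_right₀ ht (by norm_num)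
  have h3 : t^3 ≤ t^5 := pow_le_pow_right₀ ht (by norm_num)
  have hd1 : 10^7*t ≤ d := by nlinarith
  refine ⟨ht0, by nlinarith, by nlinarith, hd1, by nlinarith, by nlinarith⟩
end helpers

-- lower bound z ≤ d
set_option maxHeartbeats 1000000 in
lemma sub_low (t i d z : ℝ) (ht : 1 ≤ t) (hi1 : 1 ≤ i) (hit : i + 1 ≤ t)
    (hd : 10^7 * t^5 ≤ d) (hz : d/4 ≤ z) (hzd : z ≤ d) :
    8*t^2/d * |Real.log (z/d)| + 32*t^3/d^2 - 1/(32*t*d)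
      ≤ (1/8) * (Real.log ((z - i)/(d - i)) - (z - d)*d/((d - i)*z)) := by
  obtain ⟨ht0, hd0, hid, hdt, hdt2, hdt3⟩ := facts ht hi1 hit hd
  have hz0 : 0 < z := by nlinarith
  have hdi0 : 0 < d - i := by nlinarith
  have hzi0 : 0 < z - i := by nlinarith
  -- abs log bound
  have habs : |Real.log (z/d)| ≤ 4*(d-z)/d := by
    have h1 : Real.log (z/d) ≤ 0 :=
      Real.log_nonpos (by positivity) ((div_le_one hd0).mpr hzd)
    rw [abs_of_nonpos h1]
    have h2 : Real.log (d/z) ≤ d/z - 1 := Real.log_le_sub_one_of_pos (by positivity)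
    have h3 : Real.log (z/d) = - Real.log (d/z) := by
      rw [← Real.log_inv, inv_div]
    rw [h3, neg_neg]
    have h4 : d/z - 1 ≤ 4*(d-z)/d := by
      rw [div_sub_one hz0.ne', div_le_div_iff₀ hz0 hd0]
      nlinarith
    linarith
  -- G lower bound
  have hw0 : 0 < (z-i)/(d-i) := by positivity
  have hw1 : (z-i)/(d-i) ≤ 1 := by rw [div_le_one hdi0]; linarith
  have hlog := half_sub_le_log hw0 hw1
  have hident : ((z-i)/(d-i))/2 - 1/(2*((z-i)/(d-i))) - (z - d)*d/((d - i)*z)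
      = (d-z)^2*(z-2*i)/(2*(d-i)*(z-i)*z) := by
    field_simp
    ring
  have hG : (d-z)^2/(16*d^2)
      ≤ Real.log ((z - i)/(d - i)) - (z - d)*d/((d - i)*z) := by
    have h5 : (d-z)^2/(16*d^2) ≤ (d-z)^2*(z-2*i)/(2*(d-i)*(z-i)*z) := by
      rw [div_le_div_iff₀ (by positivity) (by positivity)]
      have a1 : (d-i)*(z-i) ≤ d*d := by nlinarith
      have a2 : (d-i)*(z-i)*z ≤ d*d*d := by nlinarith
      have a3 : d*d*d ≤ 8*d^2*(z-2*i) := by nlinarith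
      nlinarith [sq_nonneg (d-z), mul_le_mul_of_nonneg_left (a2.trans a3) (sq_nonneg (d-z))]
    have h6 := sub_le_sub_right hlog ((z - d)*d/((d - i)*z))
    rw [hident] at h6
    linarith [h6, h5]
  -- numeric quadratic
  have hP : 0 ≤ t*(d-z)^2 + 4*d - 4096*t^3*(d-z) - 4096*t^4 := by
    nlinarith [mul_nonneg ht0.le (sq_nonneg ((d-z) - 2048*t^2)),
      mul_nonneg (pow_nonneg ht0.le 4) (sub_nonneg.mpr ht)]
  have hkey : 8*t^2/d * (4*(d-z)/d) + 32*t^3/d^2 - 1/(32*t*d)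
      ≤ (1/8) * ((d-z)^2/(16*d^2)) := by
    rw [← sub_nonneg]
    have hident2 : (1/8) * ((d-z)^2/(16*d^2))
        - (8*t^2/d * (4*(d-z)/d) + 32*t^3/d^2 - 1/(32*t*d))
        = (t*(d-z)^2 + 4*d - 4096*t^3*(d-z) - 4096*t^4)/(128*t*d^2) := by
      field_simp
      ring
    rw [hident2]
    positivity
  have hmul : 8*t^2/d * |Real.log (z/d)| ≤ 8*t^2/d * (4*(d-z)/d) :=
    mul_le_mul_of_nonneg_left habs (by positivity)
  linarith

set_option maxHeartbeats 1000000 in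
lemma sub_mid (t i d z : ℝ) (ht : 1 ≤ t) (hi1 : 1 ≤ i) (hit : i + 1 ≤ t)
    (hd : 10^7 * t^5 ≤ d) (hdz : d ≤ z) (hz32 : z ≤ 3*d/2) :
    8*t^2/d * |Real.log (z/d)| + 32*t^3/d^2 - 1/(32*t*d)
      ≤ (1/8) * (Real.log ((z - i)/(d - i)) - (z - d)*d/((d - i)*z)) := by
  obtain ⟨ht0, hd0, hid, hdt, hdt2, hdt3⟩ := facts ht hi1 hit hd
  have hz0 : 0 < z := by linarith
  have hdi0 : 0 < d - i := by nlinarith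
  have hzi0 : 0 < z - i := by nlinarith
  have habs : |Real.log (z/d)| ≤ 4*(z-d)/d := by
    have h1 : 0 ≤ Real.log (z/d) :=
      Real.log_nonneg (by rw [le_div_iff₀ hd0]; linarith)
    rw [abs_of_nonneg h1]
    have h2 : Real.log (z/d) ≤ z/d - 1 := Real.log_le_sub_one_of_pos (by positivity)
    have h4 : z/d - 1 ≤ 4*(z-d)/d := by
      rw [div_sub_one hd0.ne', div_le_div_iff₀ hd0 hd0]
      nlinarith
    linarith
  have hw1 : 1 ≤ (z-i)/(d-i) := by rw [le_div_iff₀ hdi0]; linarith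
  have hlog := quad_le_log hw1
  have hident : ((z-i)/(d-i) - 1) - ((z-i)/(d-i) - 1)^2/2 - (z - d)*d/((d - i)*z)
      = (z-d)^2*(2*d-2*i-z)/(2*(d-i)^2*z) := by
    field_simp
    ring
  have hG : (z-d)^2/(8*d^2)
      ≤ Real.log ((z - i)/(d - i)) - (z - d)*d/((d - i)*z) := by
    have h5 : (z-d)^2/(8*d^2) ≤ (z-d)^2*(2*d-2*i-z)/(2*(d-i)^2*z) := by
      rw [div_le_div_iff₀ (by positivity) (by positivity)]
      have a3 : 2*(d-i)^2*z ≤ 8*d^2*(2*d-2*i-z) := by nlinarith [sq_nonneg i, sq_nonneg (d-i)]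
      nlinarith [mul_le_mul_of_nonneg_left a3 (sq_nonneg (z-d))]
    have h6 := sub_le_sub_right hlog ((z - d)*d/((d - i)*z))
    rw [hident] at h6
    linarith [h6, h5]
  have hP : 0 ≤ t*(z-d)^2 + 2*d - 2048*t^3*(z-d) - 2048*t^4 := by
    nlinarith [mul_nonneg ht0.le (sq_nonneg ((z-d) - 1024*t^2)),
      mul_nonneg (pow_nonneg ht0.le 4) (sub_nonneg.mpr ht)]
  have hkey : 8*t^2/d * (4*(z-d)/d) + 32*t^3/d^2 - 1/(32*t*d)
      ≤ (1/8) * ((z-d)^2/(8*d^2)) := by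
    rw [← sub_nonneg]
    have hident2 : (1/8) * ((z-d)^2/(8*d^2))
        - (8*t^2/d * (4*(z-d)/d) + 32*t^3/d^2 - 1/(32*t*d))
        = (t*(z-d)^2 + 2*d - 2048*t^3*(z-d) - 2048*t^4)/(64*t*d^2) := by
      field_simp
      ring
    rw [hident2]
    positivity
  have hmul : 8*t^2/d * |Real.log (z/d)| ≤ 8*t^2/d * (4*(z-d)/d) :=
    mul_le_mul_of_nonneg_left habs (by positivity)
  linarith

-- facts for the log regime, shared by sub_c and sub_big (z ≥ 3d/2)
lemma log_regime (t i d z : ℝ) (ht : 1 ≤ t) (hi1 : 1 ≤ i) (hit : i + 1 ≤ t)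
    (hd : 10^7 * t^5 ≤ d) (hz32 : 3*d/2 ≤ z) :
    Real.log (z/d) - 1 + d/z - 2*t/d
      ≤ Real.log ((z - i)/(d - i)) - (z - d)*d/((d - i)*z) := by
  obtain ⟨ht0, hd0, hid, hdt, hdt2, hdt3⟩ := facts ht hi1 hit hd
  have hz0 : 0 < z := by linarith
  have hdi0 : 0 < d - i := by nlinarith
  have hzi0 : 0 < z - i := by nlinarith
  -- log((z-i)/(d-i)) ≥ log(z/d)
  have hmono : Real.log (z/d) ≤ Real.log ((z - i)/(d - i)) := by
    apply Real.log_le_log (by positivity)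
    rw [div_le_div_iff₀ hd0 hdi0]
    nlinarith
  -- u ≤ 1 - d/z + 2t/d
  have hu : (z - d)*d/((d - i)*z) ≤ 1 - d/z + 2*t/d := by
    have e1 : (z - d)*d/((d - i)*z) - (1 - d/z) = (z-d)*i/((d-i)*z) := by
      field_simp
      ring
    have k1 : i*d ≤ 2*t*(d-i) := by
      nlinarith [mul_le_mul_of_nonneg_left hid ht0.le,
        mul_le_mul_of_nonneg_right (show i ≤ t by linarith) hd0.le]
    have e2 : (z-d)*i/((d-i)*z) ≤ 2*t/d := by
      rw [div_le_div_iff₀ (by positivity) hd0]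
      nlinarith [mul_le_mul_of_nonneg_right k1 hz0.le,
        mul_pos (mul_pos hd0 (show (0:ℝ) < i by linarith)) hd0]
    linarith
  linarith

set_option maxHeartbeats 1000000 in
lemma sub_c (t i d z : ℝ) (ht : 1 ≤ t) (hi1 : 1 ≤ i) (hit : i + 1 ≤ t)
    (hd : 10^7 * t^5 ≤ d) (hz32 : 3*d/2 ≤ z) (hz2 : z ≤ 2*d) :
    8*t^2/d * |Real.log (z/d)| + 32*t^3/d^2 - 1/(32*t*d)
      ≤ (1/8) * (Real.log ((z - i)/(d - i)) - (z - d)*d/((d - i)*z)) := by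
  obtain ⟨ht0, hd0, hid, hdt, hdt2, hdt3⟩ := facts ht hi1 hit hd
  have hz0 : 0 < z := by linarith
  have hreg := log_regime t i d z ht hi1 hit hd hz32
  -- upper bound on |log(z/d)|
  have habs : |Real.log (z/d)| ≤ Real.log 2 := by
    have h1 : 0 ≤ Real.log (z/d) :=
      Real.log_nonneg (by rw [le_div_iff₀ hd0]; linarith)
    rw [abs_of_nonneg h1]
    apply Real.log_le_log (by positivity)
    rw [div_le_iff₀ hd0]; linarith
  -- lower bound on log(z/d): log(z/d) = log(3/2) + log(2z/(3d)) ≥ log 2 - 1/3 + 1 - 3d/(2z)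
  have hsplit : Real.log (z/d) = Real.log (3/2) + Real.log (2*z/(3*d)) := by
    rw [← Real.log_mul (by norm_num) (by positivity)]
    congr 1
    field_simp
  have h32 : Real.log 2 - 1/3 ≤ Real.log (3/2) := by
    have e : Real.log (3/2) = Real.log 2 - Real.log (4/3) := by
      rw [← Real.log_div (by norm_num) (by norm_num)]
      norm_num
    have := Real.log_le_sub_one_of_pos (show (0:ℝ) < 4/3 by norm_num)
    rw [e]; linarith
  have hlow : 1 - 3*d/(2*z) ≤ Real.log (2*z/(3*d)) := by
    have h5 : Real.log (3*d/(2*z)) ≤ 3*d/(2*z) - 1 :=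
      Real.log_le_sub_one_of_pos (by positivity)
    have h6 : Real.log (2*z/(3*d)) = - Real.log (3*d/(2*z)) := by
      rw [← Real.log_inv]
      congr 1
      rw [inv_div]
    rw [h6]; linarith
  have hdz3 : d/(2*z) ≤ 1/3 := by
    rw [div_le_div_iff₀ (by positivity) (by norm_num)]; linarith
  -- so G ≥ log 2 - 2/3 - 2t/d
  have hG : Real.log 2 - 2/3 - 2*t/d
      ≤ Real.log ((z - i)/(d - i)) - (z - d)*d/((d - i)*z) := by
    have : Real.log 2 - 1/3 + 1 - 3*d/(2*z) ≤ Real.log (z/d) := by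
      rw [hsplit]; linarith
    have e3 : 3*d/(2*z) = d/(2*z) + d/z := by ring
    nlinarith [hreg, hdz3]
  -- numerics
  have hl2u : Real.log 2 < 0.6931471808 := Real.log_two_lt_d9
  have hl2l : 0.6931471803 < Real.log 2 := Real.log_two_gt_d9
  have b1 : 8*t^2/d * |Real.log (z/d)| ≤ 6*t^2/d := by
    have : 8*t^2/d * |Real.log (z/d)| ≤ 8*t^2/d * Real.log 2 :=
      mul_le_mul_of_nonneg_left habs (by positivity)
    have h7 : 8*t^2/d * Real.log 2 ≤ 8*t^2/d * 0.75 :=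
      mul_le_mul_of_nonneg_left (by linarith) (by positivity)
    calc 8*t^2/d * |Real.log (z/d)| ≤ 8*t^2/d * 0.75 := by linarith
      _ = 6*t^2/d := by ring
  have b2 : 6*t^2/d ≤ 6/10^6 := by
    rw [div_le_div_iff₀ hd0 (by norm_num)]
    nlinarith
  have b3 : 32*t^3/d^2 ≤ 32/10^7 := by
    rw [div_le_div_iff₀ (by positivity) (by norm_num)]
    nlinarith [sq_nonneg d, mul_le_mul_of_nonneg_left hdt3 hd0.le]
  have b4 : t/d ≤ 1/10^7 := by
    rw [div_le_div_iff₀ hd0 (by norm_num)]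
    nlinarith
  have b5 : (0:ℝ) ≤ 1/(32*t*d) := by positivity
  have b6 : 2*t/d ≤ 2*(1/10^7) := by
    rw [div_le_iff₀ hd0]
    nlinarith
  nlinarith [hG, hl2l, b1, b2, b3, b6, b5]

set_option maxHeartbeats 1000000 in
lemma sub_big (t i d z : ℝ) (ht : 1 ≤ t) (hi1 : 1 ≤ i) (hit : i + 1 ≤ t)
    (hd : 10^7 * t^5 ≤ d) (hz2 : 2*d ≤ z) :
    8*t^2/d * |Real.log (z/d)| + 32*t^3/d^2 + 1/(32*t*d)
      ≤ (1/8) * (Real.log ((z - i)/(d - i)) - (z - d)*d/((d - i)*z)) := by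
  obtain ⟨ht0, hd0, hid, hdt, hdt2, hdt3⟩ := facts ht hi1 hit hd
  have hz0 : 0 < z := by linarith
  have hreg := log_regime t i d z ht hi1 hit hd (by linarith)
  have hLnn : 0 ≤ Real.log (z/d) :=
    Real.log_nonneg (by rw [le_div_iff₀ hd0]; linarith)
  have habs : |Real.log (z/d)| = Real.log (z/d) := abs_of_nonneg hLnn
  -- L ≥ log 2 + 1 - 2d/z
  have hsplit : Real.log (z/d) = Real.log 2 + Real.log (z/(2*d)) := by
    rw [← Real.log_mul (by norm_num) (by positivity)]
    congr 1
    field_simp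
  have hlow : 1 - 2*d/z ≤ Real.log (z/(2*d)) := by
    have h5 : Real.log (2*d/z) ≤ 2*d/z - 1 :=
      Real.log_le_sub_one_of_pos (by positivity)
    have h6 : Real.log (z/(2*d)) = - Real.log (2*d/z) := by
      rw [← Real.log_inv]; congr 1; rw [inv_div]
    rw [h6]; linarith
  -- G ≥ L/2 + (log 2 - 1)/2 - 2t/d
  have hG : Real.log (z/d)/2 + (Real.log 2 - 1)/2 - 2*t/d
      ≤ Real.log ((z - i)/(d - i)) - (z - d)*d/((d - i)*z) := by
    have e1 : Real.log (z/d)/2 - 1 + d/z ≥ (Real.log 2 - 1)/2 := by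
      have : Real.log 2 + 1 - 2*d/z ≤ Real.log (z/d) := by rw [hsplit]; linarith
      linarith [this, (by ring : 2*d/z = 2*(d/z))]
    linarith
  -- coefficient bound : 8t²/d ≤ 1/32
  have hco : 8*t^2/d ≤ 1/32 := by
    rw [div_le_div_iff₀ hd0 (by norm_num)]
    nlinarith
  have hterm : 8*t^2/d * Real.log (z/d) ≤ 1/32 * Real.log (z/d) :=
    mul_le_mul_of_nonneg_right hco hLnn
  have hl2u : Real.log 2 < 0.6931471808 := Real.log_two_lt_d9
  have hl2l : 0.6931471803 < Real.log 2 := Real.log_two_gt_d9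
  have hLl2 : Real.log 2 ≤ Real.log (z/d) := by
    apply Real.log_le_log (by norm_num)
    rw [le_div_iff₀ hd0]; linarith
  have b3 : 32*t^3/d^2 ≤ 32/10^7 := by
    rw [div_le_div_iff₀ (by positivity) (by norm_num)]
    nlinarith [mul_le_mul_of_nonneg_left hdt3 hd0.le]
  have b6 : 2*t/d ≤ 2*(1/10^7) := by
    rw [div_le_iff₀ hd0]; nlinarith
  have b7 : 1/(32*t*d) ≤ 1/10^7 := by
    rw [div_le_div_iff₀ (by positivity) (by norm_num)]
    nlinarith
  rw [habs]
  -- need : 8t²/d·L + 32t³/d² + 1/(32td) ≤ (1/8)(L/2 + (log2-1)/2 - 2t/d)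
  -- i.e. L/32 slack: (1/16 - 1/32)·L ≥ log2/32 ≥ 0.02166 ≥ (1-log2)/16 + small
  nlinarith [hG, hterm, hLl2, hl2l, hl2u, b3, b6, b7]

lemma perVar (t i d z : ℝ) (ht : 1 ≤ t) (hi1 : 1 ≤ i) (hit : i + 1 ≤ t)
    (hd : 10^7 * t^5 ≤ d) (hz : d/4 ≤ z) :
    8*t^2/d * |Real.log (z/d)| + 32*t^3/d^2 - 1/(32*t*d)
      ≤ (1/8) * (Real.log ((z - i)/(d - i)) - (z - d)*d/((d - i)*z)) := by
  rcases le_or_gt z d with h1 | h1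
  · exact sub_low t i d z ht hi1 hit hd hz h1
  rcases le_or_gt z (3*d/2) with h2 | h2
  · exact sub_mid t i d z ht hi1 hit hd h1.le h2
  rcases le_or_gt z (2*d) with h3 | h3
  · exact sub_c t i d z ht hi1 hit hd h2.le h3
  · have h4 := sub_big t i d z ht hi1 hit hd h3.le
    have ht0 : 0 < t := by linarith
    have hd0 : 0 < d := by nlinarith [pow_pos ht0 5]
    have : (0:ℝ) ≤ 1/(32*t*d) := by positivity
    linarith

theorem error_terms_nonneg (t : ℕ) (ht : 1 ≤ t) :
    ∃ d0 : ℝ, ∀ d : ℝ, d0 ≤ d → ∀ i : ℕ, 1 ≤ i → i ≤ t - 1 →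
      ∀ x y : ℝ, d / 4 ≤ x → d / 4 ≤ y →
      0 ≤ (1/8) * ((1/(y/d)) * ((y/d) * Real.log ((y/d * d - i)/(d - i))
              - (y/d - 1) * d/(d - i))
            + (1/(x/d)) * ((x/d) * Real.log ((x/d * d - i)/(d - i))
              - (x/d - 1) * d/(d - i)))
          + (1/(8*t)) * min (1/x) (1/y)
          - (8*t^2/d) * (|Real.log (x/y)| + 8*t/d) := by
  refine ⟨10^7 * (t:ℝ)^5, fun d hd i hi1 hi2 x y hx hy => ?_⟩
  have htR : (1:ℝ) ≤ (t:ℝ) := by exact_mod_cast ht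
  have hi1R : (1:ℝ) ≤ (i:ℝ) := by exact_mod_cast hi1
  have hitR : (i:ℝ) + 1 ≤ (t:ℝ) := by
    have : i + 1 ≤ t := by omega
    exact_mod_cast this
  obtain ⟨ht0, hd0, hid, hdt, hdt2, hdt3⟩ := facts htR hi1R hitR hd
  have hx0 : 0 < x := by linarith
  have hy0 : 0 < y := by linarith
  have hdiv : d - (i:ℝ) ≠ 0 := by nlinarith
  -- simplify the two Σ¹ summands
  have hy' : (1/(y/d)) * ((y/d) * Real.log ((y/d * d - i)/(d - i))
        - (y/d - 1) * d/(d - i))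
      = Real.log ((y - i)/(d - i)) - (y - d)*d/((d - i)*y) := by
    rw [div_mul_cancel₀ y hd0.ne']
    field_simp
  have hx' : (1/(x/d)) * ((x/d) * Real.log ((x/d * d - i)/(d - i))
        - (x/d - 1) * d/(d - i))
      = Real.log ((x - i)/(d - i)) - (x - d)*d/((d - i)*x) := by
    rw [div_mul_cancel₀ x hd0.ne']
    field_simp
  rw [hy', hx']
  -- bound Σ³
  have hlxy : |Real.log (x/y)| ≤ |Real.log (x/d)| + |Real.log (y/d)| := by
    have e : Real.log (x/y) = Real.log (x/d) - Real.log (y/d) := by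
      rw [Real.log_div hx0.ne' hy0.ne', Real.log_div hx0.ne' hd0.ne',
        Real.log_div hy0.ne' hd0.ne']
      ring
    rw [e]
    exact abs_sub _ _
  have hS3 : (8*(t:ℝ)^2/d) * (|Real.log (x/y)| + 8*t/d)
      ≤ 8*(t:ℝ)^2/d * |Real.log (x/d)| + 8*(t:ℝ)^2/d * |Real.log (y/d)|
        + 64*(t:ℝ)^3/d^2 := by
    have hc : (0:ℝ) ≤ 8*(t:ℝ)^2/d := by positivity
    have h1 := mul_le_mul_of_nonneg_left hlxy hc
    have e2 : (8*(t:ℝ)^2/d) * (8*(t:ℝ)/d) = 64*(t:ℝ)^3/d^2 := by ring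
    have e3 : (8*(t:ℝ)^2/d) * (|Real.log (x/y)| + 8*(t:ℝ)/d)
        = (8*(t:ℝ)^2/d) * |Real.log (x/y)| + (8*(t:ℝ)^2/d) * (8*(t:ℝ)/d) := by ring
    have e4 : (8*(t:ℝ)^2/d) * (|Real.log (x/d)| + |Real.log (y/d)|)
        = 8*(t:ℝ)^2/d * |Real.log (x/d)| + 8*(t:ℝ)^2/d * |Real.log (y/d)| := by ring
    linarith [h1, e2, e3, e4]
  have hPx := perVar (t:ℝ) (i:ℝ) d x htR hi1R hitR hd hx
  have hPy := perVar (t:ℝ) (i:ℝ) d y htR hi1R hitR hd hy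
  rcases le_or_gt x (2*d) with hx2 | hx2
  · rcases le_or_gt y (2*d) with hy2 | hy2
    · have hminx : 1/(2*d) ≤ 1/x := one_div_le_one_div_of_le hx0 hx2
      have hminy : 1/(2*d) ≤ 1/y := one_div_le_one_div_of_le hy0 hy2
      have hmin : 1/(2*d) ≤ min (1/x) (1/y) := le_min hminx hminy
      have hminmul : 2*(1/(32*(t:ℝ)*d)) ≤ (1/(8*(t:ℝ))) * min (1/x) (1/y) := by
        have h5 := mul_le_mul_of_nonneg_left hmin
          (show (0:ℝ) ≤ 1/(8*(t:ℝ)) by positivity)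
        have e : (1/(8*(t:ℝ))) * (1/(2*d)) = 2*(1/(32*(t:ℝ)*d)) := by ring
        linarith
      linarith [hPx, hPy, hS3, hminmul, (show 64*(t:ℝ)^3/d^2 = 32*(t:ℝ)^3/d^2 + 32*(t:ℝ)^3/d^2 by ring)]
    · have hQy := sub_big (t:ℝ) (i:ℝ) d y htR hi1R hitR hd hy2.le
      have hminnn : (0:ℝ) ≤ min (1/x) (1/y) := le_min (by positivity) (by positivity)
      have h6 : (0:ℝ) ≤ (1/(8*(t:ℝ))) * min (1/x) (1/y) :=
        mul_nonneg (by positivity) hminnn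
      linarith [hPx, hQy, hS3, h6, (show 64*(t:ℝ)^3/d^2 = 32*(t:ℝ)^3/d^2 + 32*(t:ℝ)^3/d^2 by ring)]
  · have hQx := sub_big (t:ℝ) (i:ℝ) d x htR hi1R hitR hd hx2.le
    have hminnn : (0:ℝ) ≤ min (1/x) (1/y) := le_min (by positivity) (by positivity)
    have h6 : (0:ℝ) ≤ (1/(8*(t:ℝ))) * min (1/x) (1/y) :=
      mul_nonneg (by positivity) hminnn
    linarith [hQx, hPy, hS3, h6, (show 64*(t:ℝ)^3/d^2 = 32*(t:ℝ)^3/d^2 + 32*(t:ℝ)^3/d^2 by ring)]
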